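/- arXiv:2305.18877 — 2 statements merged into one kernel-verified Lean document; each statement's English description precedes it below -/
import Mathlib

section
/- Let B ⊂ X be a ball, σ ≥ 1, and w a nonnegative locally integrable function. Assume there exists 0 < ε < 1 such that ∫_B (w − w_{σB})₊ dμ ≤ ε w(σB). Then for every λ with ε < λ < 1 one has w(B ∩ {x : (1 − ε/λ) w(x) ≥ w_{σB}}) ≤ λ w(σB). -/
open MeasureTheory Metric Set

variable {X : Type*}

/-- Integral average of `f` over `A` with respect to `μ`. -/
noncomputable def avgOn [MeasurableSpace X] (μ : Measure X) (f : X → ℝ) (A : Set X) : ℝ :=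
  (∫ x in A, f x ∂μ) / (μ A).toReal

/-- `μ` is a doubling measure with doubling constant `Cμ > 1`. -/
def IsDoubling [PseudoMetricSpace X] [MeasurableSpace X] (μ : Measure X) (Cμ : ℝ) : Prop :=
  1 < Cμ ∧ ∀ (x : X) (r : ℝ), 0 < r →
    0 < μ (ball x r) ∧ μ (ball x (2 * r)) ≤ ENNReal.ofReal Cμ * μ (ball x r) ∧
      μ (ball x r) < ⊤

/-- If `∫_B (w − w_{σB})₊ dμ ≤ ε w(σB)` with `0 < ε < 1`, then for every `ε < λ < 1`,
`w(B ∩ {(1 − ε/λ) w ≥ w_{σB}}) ≤ λ w(σB)`. -/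
theorem weakGR_implies_weakAinf [MetricSpace X] [MeasurableSpace X] [BorelSpace X]
    (μ : Measure X) (Cμ : ℝ) (hμ : IsDoubling μ Cμ)
    (w : X → ℝ) (hw : ∀ x, 0 ≤ w x) (hloc : LocallyIntegrable w μ)
    (x₀ : X) (r : ℝ) (hr : 0 < r) (σ : ℝ) (hσ : 1 ≤ σ)
    (ε : ℝ) (hε0 : 0 < ε) (hε1 : ε < 1)
    (hGR : ∫ x in ball x₀ r, max (w x - avgOn μ w (ball x₀ (σ * r))) 0 ∂μ ≤
      ε * ∫ x in ball x₀ (σ * r), w x ∂μ)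
    (lam : ℝ) (hl1 : ε < lam) (hl2 : lam < 1) :
    ∫ x in ball x₀ r ∩ {x | avgOn μ w (ball x₀ (σ * r)) ≤ (1 - ε / lam) * w x}, w x ∂μ ≤
      lam * ∫ x in ball x₀ (σ * r), w x ∂μ := by
  set c : ℝ := avgOn μ w (ball x₀ (σ * r)) with hc
  have hBsub : ball x₀ r ⊆ ball x₀ (σ * r) :=
    ball_subset_ball (by nlinarith)
  by_cases hint : IntegrableOn w (ball x₀ (σ * r)) μ
  · -- main case
    have hl0 : 0 < lam := hε0.trans hl1
    have hratio : 0 < ε / lam := div_pos hε0 hl0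
    have hintB : IntegrableOn w (ball x₀ r) μ := hint.mono_set hBsub
    set g : X → ℝ := fun x => max (w x - c) 0 with hg
    have hgint : IntegrableOn g (ball x₀ r) μ :=
      (hintB.sub (integrableOn_const (hμ.2 x₀ r hr).2.2.ne)).pos_part
    set E : Set X := ball x₀ r ∩ {x | c ≤ (1 - ε / lam) * w x} with hE
    have hEsub : E ⊆ ball x₀ r := inter_subset_left
    have hS : NullMeasurableSet {x | c ≤ (1 - ε / lam) * w x} (μ.restrict (ball x₀ r)) :=
      AEStronglyMeasurable.nullMeasurableSet_le aestronglyMeasurable_const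
        (hintB.1.const_mul _)
    have hrr : μ.restrict E =
        (μ.restrict (ball x₀ r)).restrict {x | c ≤ (1 - ε / lam) * w x} := by
      rw [Measure.restrict_restrict₀ hS, inter_comm]
    have hmemE : ∀ᵐ x ∂μ.restrict E, x ∈ E := by
      rw [hrr]
      filter_upwards [ae_restrict_mem₀ hS,
        ((ae_restrict_mem measurableSet_ball).filter_mono
          (ae_mono Measure.restrict_le_self))] with x h1 h2
      exact ⟨h2, h1⟩
    have hwE : IntegrableOn w E μ := hintB.mono_set hEsub
    have hgE : IntegrableOn g E μ := hgint.mono_set hEsub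
    have key : ∫ x in E, (ε / lam) * w x ∂μ ≤ ∫ x in E, g x ∂μ := by
      refine integral_mono_ae ((hwE.const_mul _)) hgE ?_
      filter_upwards [hmemE] with x hx
      have hx2 : c ≤ (1 - ε / lam) * w x := hx.2
      have : (ε / lam) * w x ≤ w x - c := by nlinarith [hw x]
      exact this.trans (le_max_left _ _)
    have hEB : ∫ x in E, g x ∂μ ≤ ∫ x in ball x₀ r, g x ∂μ := by
      refine setIntegral_mono_set hgint ?_ (HasSubset.Subset.eventuallyLE hEsub)
      filter_upwards with x using le_max_right _ _
    have hmul : ∫ x in E, (ε / lam) * w x ∂μ = (ε / lam) * ∫ x in E, w x ∂μ :=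
      integral_const_mul _ _
    have chain : (ε / lam) * ∫ x in E, w x ∂μ ≤ ε * ∫ x in ball x₀ (σ * r), w x ∂μ := by
      rw [← hmul]; exact key.trans (hEB.trans hGR)
    have : ∫ x in E, w x ∂μ ≤ lam * ∫ x in ball x₀ (σ * r), w x ∂μ := by
      rw [div_mul_eq_mul_div] at chain
      have := (div_le_iff₀ hl0).mp chain
      nlinarith
    exact this
  · -- degenerate case : w not integrable on the big ball
    have hI : ∫ x in ball x₀ (σ * r), w x ∂μ = 0 := integral_undef hint
    have hc0 : c = 0 := by rw [hc, avgOn, hI, zero_div]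
    have hset : {x : X | c ≤ (1 - ε / lam) * w x} = univ := by
      ext x
      simp only [hc0, mem_setOf_eq, mem_univ, iff_true]
      have hl0 : 0 < lam := hε0.trans hl1
      have : 0 ≤ 1 - ε / lam := by
        have : ε / lam < 1 := (div_lt_one hl0).mpr hl1
        linarith
      exact mul_nonneg this (hw x)
    rw [hset, inter_univ, hI, mul_zero]
    calc ∫ x in ball x₀ r, w x ∂μ
        = ∫ x in ball x₀ r, max (w x - c) 0 ∂μ := by
          refine setIntegral_congr_fun measurableSet_ball fun x _ => ?_
          rw [hc0, sub_zero, max_eq_left (hw x)]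
      _ ≤ ε * ∫ x in ball x₀ (σ * r), w x ∂μ := hGR
      _ = 0 := by rw [hI, mul_zero]
end

section
/- Let B ⊂ X be a ball, σ ≥ 1, and w a nonnegative locally integrable function. Assume there exist α, β ∈ (0,1) such that w(B ∩ {x : α w(x) ≥ w_{σB}}) ≤ β w(σB). Then ∫_B (w − w_{σB})₊ dμ ≤ (1 − α(1 − β)) w(σB). -/
open MeasureTheory Metric Set

variable {X : Type*}

/-- If there exist `α, β ∈ (0,1)` with `w(B ∩ {α w ≥ w_{σB}}) ≤ β w(σB)`, then
`∫_B (w − w_{σB})₊ dμ ≤ (1 − α(1 − β)) w(σB)`. -/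
theorem weakAinf_implies_weakGR [MetricSpace X] [MeasurableSpace X] [BorelSpace X]
    (μ : Measure X) (Cμ : ℝ) (hμ : IsDoubling μ Cμ)
    (w : X → ℝ) (hw : ∀ x, 0 ≤ w x) (hloc : LocallyIntegrable w μ)
    (x₀ : X) (r : ℝ) (hr : 0 < r) (σ : ℝ) (hσ : 1 ≤ σ)
    (α β : ℝ) (hα0 : 0 < α) (hα1 : α < 1) (hβ0 : 0 < β) (hβ1 : β < 1)
    (hA : ∫ x in ball x₀ r ∩ {x | avgOn μ w (ball x₀ (σ * r)) ≤ α * w x}, w x ∂μ ≤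
      β * ∫ x in ball x₀ (σ * r), w x ∂μ) :
    ∫ x in ball x₀ r, max (w x - avgOn μ w (ball x₀ (σ * r))) 0 ∂μ ≤
      (1 - α * (1 - β)) * ∫ x in ball x₀ (σ * r), w x ∂μ := by

  set Bs := ball x₀ r with hBs
  set Bb := ball x₀ (σ * r) with hBb
  have hσ0 : (0:ℝ) < σ := lt_of_lt_of_le one_pos hσ
  have hrσ : 0 < σ * r := mul_pos hσ0 hr
  obtain ⟨-, -, hBb_fin⟩ := hμ.2 x₀ (σ * r) hrσ
  obtain ⟨-, -, hBs_fin⟩ := hμ.2 x₀ r hr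
  have hsub : Bs ⊆ Bb := ball_subset_ball (le_mul_of_one_le_left hr.le hσ)
  set c := avgOn μ w Bb with hc
  have hIσ_nonneg : 0 ≤ ∫ x in Bb, w x ∂μ :=
    setIntegral_nonneg measurableSet_ball fun x _ => hw x
  have hc_nonneg : 0 ≤ c := div_nonneg hIσ_nonneg ENNReal.toReal_nonneg
  have hcoef : 0 ≤ 1 - α * (1 - β) := by nlinarith
  by_cases hInt : IntegrableOn w Bb μ
  · have hIntB : IntegrableOn w Bs μ := hInt.mono_set hsub
    have haesm : AEStronglyMeasurable w (μ.restrict Bb) := hInt.aestronglyMeasurable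
    set w' := haesm.mk w with hw'
    have hww' : w =ᵐ[μ.restrict Bb] w' := haesm.ae_eq_mk
    have hrest : w =ᵐ[μ.restrict Bs] w' :=
      ae_restrict_of_ae_restrict_of_subset hsub hww'
    have hw'meas : Measurable w' := haesm.stronglyMeasurable_mk.measurable
    set E' : Set X := {x | c ≤ α * w' x} with hE'
    have hE'meas : MeasurableSet E' :=
      measurableSet_le measurable_const (hw'meas.const_mul α)
    have hbound : ∀ᵐ x ∂(μ.restrict Bs),
        max (w x - c) 0 ≤ (1 - α) * w x + α * E'.indicator w x := by
      filter_upwards [hrest] with x hx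
      by_cases hxE : x ∈ E'
      · rw [indicator_of_mem hxE w]
        have h1 : max (w x - c) 0 ≤ w x := max_le (by linarith) (hw x)
        linarith
      · rw [indicator_of_notMem hxE w]
        have hlt : α * w x < c := by
          have : ¬ c ≤ α * w' x := hxE
          rw [← hx] at this; linarith [not_le.mp this]
        have h2 : 0 ≤ (1 - α) * w x := mul_nonneg (by linarith) (hw x)
        have h3 : max (w x - c) 0 ≤ (1 - α) * w x := max_le (by nlinarith) h2
        linarith
    have hInd : IntegrableOn (E'.indicator w) Bs μ := hIntB.indicator hE'meas
    have hLHSint : IntegrableOn (fun x => max (w x - c) 0) Bs μ := by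
      have hconst : IntegrableOn (fun _ => c) Bs μ :=
        integrableOn_const hBs_fin.ne
      exact (hIntB.sub hconst).pos_part
    have h1 : ∫ x in Bs, max (w x - c) 0 ∂μ ≤
        ∫ x in Bs, ((1 - α) * w x + α * E'.indicator w x) ∂μ :=
      integral_mono_ae hLHSint ((hIntB.const_mul _).add (hInd.const_mul _)) hbound
    rw [integral_add (hIntB.const_mul _) (hInd.const_mul _), integral_const_mul,
      integral_const_mul, setIntegral_indicator hE'meas] at h1
    have hEE' : E' =ᵐ[μ.restrict Bs] ({x | c ≤ α * w x} : Set X) := by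
      refine Filter.eventuallyEq_set.2 ?_
      filter_upwards [hrest] with x hx
      simp only [hE', mem_setOf_eq, hx]
    have e1 : ∫ x in Bs ∩ E', w x ∂μ = ∫ x in E', w x ∂(μ.restrict Bs) := by
      rw [Measure.restrict_restrict' measurableSet_ball, inter_comm]
    have e2 : ∫ x in Bs ∩ {x | c ≤ α * w x}, w x ∂μ
        = ∫ x in {x | c ≤ α * w x}, w x ∂(μ.restrict Bs) := by
      rw [Measure.restrict_restrict' measurableSet_ball, inter_comm]
    rw [e1, setIntegral_congr_set hEE', ← e2] at h1
    have hA' : ∫ x in Bs ∩ {x | c ≤ α * w x}, w x ∂μ ≤ β * ∫ x in Bb, w x ∂μ := hA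
    have hBsub : ∫ x in Bs, w x ∂μ ≤ ∫ x in Bb, w x ∂μ := by
      refine setIntegral_mono_set hInt ?_ (HasSubset.Subset.eventuallyLE hsub)
      exact Filter.Eventually.of_forall fun x => hw x
    calc ∫ x in Bs, max (w x - c) 0 ∂μ
        ≤ (1 - α) * ∫ x in Bs, w x ∂μ + α * ∫ x in Bs ∩ {x | c ≤ α * w x}, w x ∂μ := h1
      _ ≤ (1 - α * (1 - β)) * ∫ x in Bb, w x ∂μ := by nlinarith
  · have hI0 : ∫ x in Bb, w x ∂μ = 0 := integral_undef hInt
    have hc0 : c = 0 := by rw [hc]; unfold avgOn; rw [hI0]; simp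
    have hset : (Bs ∩ {x | c ≤ α * w x} : Set X) = Bs := by
      rw [hc0]
      refine inter_eq_self_of_subset_left fun x _ => ?_
      exact mem_setOf_eq ▸ mul_nonneg hα0.le (hw x)
    rw [hset, hI0, mul_zero] at hA
    have heq : ∀ x, max (w x - c) 0 = w x := fun x => by
      rw [hc0, sub_zero]; exact max_eq_left (hw x)
    simp_rw [heq, hI0, mul_zero]
    linarith
end
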